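/- If 0 < c < √2 and u(-1) = u(0), then every solution of the discretized wave equation on a graph with normalized Laplacian L remains bounded for all t ≥ 0: sup_t ‖u(t)‖ < ∞. -/

import Mathlib

lemma scalar_mode_bound (μ : ℝ) (h1 : -2 < μ) (h2 : μ ≤ 2) (y : ℤ → ℝ)
    (hi : y (-1) = y 0)
    (hr : ∀ t : ℤ, 1 ≤ t → y t = μ * y (t-1) - y (t-2)) :
    ∀ t : ℤ, 0 ≤ t → (y t)^2 ≤ 4 * (y 0)^2 / (2 + μ) := by
  have hinv : ∀ n : ℕ, y n ^ 2 + y ((n:ℤ)-1) ^ 2 - μ * (y n * y ((n:ℤ)-1))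
      = (2 - μ) * y 0 ^ 2 := by
    intro n
    induction n with
    | zero => push_cast; rw [hi]; ring
    | succ n ih =>
      have h := hr ((n:ℤ)+1) (by omega)
      have e1 : (n:ℤ) + 1 - 1 = n := by ring
      have e2 : (n:ℤ) + 1 - 2 = (n:ℤ) - 1 := by ring
      rw [e1, e2] at h
      push_cast
      rw [e1, h]
      linear_combination ih
  have hpos : (0:ℝ) < 2 + μ := by linarith
  rcases eq_or_lt_of_le h2 with heq | hlt
  · subst heq
    have hconst : ∀ n : ℕ, y n = y 0 := by
      intro n
      induction n with
      | zero => norm_num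
      | succ n ih =>
        have h := hinv (n+1)
        push_cast at h
        rw [show (n:ℤ) + 1 - 1 = (n:ℤ) by ring] at h
        have hz : (y ((n:ℤ)+1) - y n)^2 = 0 := by linear_combination h
        have := pow_eq_zero_iff (n := 2) (by norm_num) |>.mp hz
        push_cast
        linarith [ih]
    intro t ht
    have : y t = y 0 := by
      have := hconst t.toNat
      rwa [Int.toNat_of_nonneg ht] at this
    rw [this, le_div_iff₀ (by norm_num)]
    nlinarith [sq_nonneg (y 0)]
  · intro t ht
    have h := hinv t.toNat
    rw [Int.toNat_of_nonneg ht] at h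
    rw [le_div_iff₀ hpos]
    nlinarith [sq_nonneg (μ * y t - 2 * y (t-1)), sq_nonneg (y t), sq_nonneg (y 0), hlt]

/-- If 0 < c < √2 and u(-1) = u(0), every solution of the discretized wave
equation on a graph with normalized Laplacian L remains bounded for t ≥ 0. -/
theorem wave_solution_bounded
    (N : ℕ) (W : Matrix (Fin N) (Fin N) ℝ)
    (hsymm : W.IsSymm)
    (hnonneg : ∀ i j, 0 ≤ W i j)
    (hdeg : ∀ i, 0 < ∑ l, W i l)
    (L : Matrix (Fin N) (Fin N) ℝ)
    (hL : ∀ i j, L i j = if i = j then 1 else -(W i j) / (∑ l, W i l))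
    (c : ℝ) (hc : 0 < c) (hc2 : c < Real.sqrt 2)
    (u : ℤ → Fin N → ℝ)
    (hinit : u (-1) = u 0)
    (hrec : ∀ t : ℤ, 1 ≤ t →
      u t = fun i => 2 * u (t-1) i - u (t-2) i - c^2 * L.mulVec (u (t-1)) i) :
    ∃ C : ℝ, ∀ t : ℤ, 0 ≤ t → ∀ i, |u t i| ≤ C := by
  classical
  -- degrees
  let d : Fin N → ℝ := fun i => ∑ l, W i l
  have hd : ∀ i, 0 < d i := hdeg
  have hsd : ∀ i, 0 < Real.sqrt (d i) := fun i => Real.sqrt_pos.mpr (hd i)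
  have hW : ∀ i j, W j i = W i j := fun i j => hsymm.apply i j
  have hL' : ∀ i j, L i j = if i = j then 1 else -(W i j) / d i := hL
  -- symmetrized Laplacian
  let S : Matrix (Fin N) (Fin N) ℝ :=
    Matrix.of fun i j => if i = j then 1 else -(W i j) / (Real.sqrt (d i) * Real.sqrt (d j))
  have hSdiag : ∀ i, S i i = 1 := fun i => if_pos rfl
  have hSoff : ∀ i j, i ≠ j → S i j = -(W i j) / (Real.sqrt (d i) * Real.sqrt (d j)) :=
    fun i j h => if_neg h
  have hSsym : ∀ i j, S j i = S i j := by
    intro i j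
    by_cases h : i = j
    · subst h; rfl
    · rw [hSoff j i (Ne.symm h), hSoff i j h, hW i j, mul_comm]
  have hHerm : S.IsHermitian := by
    ext i j
    simp [Matrix.conjTranspose_apply, hSsym]
  -- quadratic form identity
  have hx2 : ∀ (x : Fin N → ℝ) (i : Fin N),
      x i ^ 2 = ∑ j, W i j * (x i / Real.sqrt (d i))^2 := by
    intro x i
    rw [← Finset.sum_mul, div_pow, Real.sq_sqrt (hd i).le,
      show (∑ l, W i l) = d i from rfl, mul_comm]
    exact (div_mul_cancel₀ _ (hd i).ne').symm
  have hquad : ∀ x : Fin N → ℝ,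
      dotProduct x (S.mulVec x)
        = (∑ i, ∑ j, W i j * (x i / Real.sqrt (d i))^2)
          + (∑ i, W i i * (x i / Real.sqrt (d i))^2)
          - ∑ i, ∑ j, W i j * ((x i / Real.sqrt (d i)) * (x j / Real.sqrt (d j))) := by
    intro x
    have e1 : dotProduct x (S.mulVec x) = ∑ i, ∑ j, x i * (S i j * x j) := by
      simp [dotProduct, Matrix.mulVec, Finset.mul_sum]
    have e2 : ∀ i j, x i * (S i j * x j)
        = (if i = j then x i^2 + W i i * (x i / Real.sqrt (d i))^2 else 0)
          - W i j * ((x i / Real.sqrt (d i)) * (x j / Real.sqrt (d j))) := by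
      intro i j
      by_cases h : i = j
      · subst h
        rw [hSdiag i, if_pos rfl]
        ring
      · rw [hSoff i j h, if_neg h]
        field_simp [(hsd i).ne', (hsd j).ne']
        ring
    rw [e1]
    rw [Finset.sum_congr rfl fun i _ => Finset.sum_congr rfl fun j _ => e2 i j]
    simp only [Finset.sum_sub_distrib, Finset.sum_ite_eq, Finset.mem_univ, if_true]
    rw [Finset.sum_add_distrib]
    rw [Finset.sum_congr rfl fun i _ => hx2 x i]
  -- swap lemma
  have hswap : ∀ y : Fin N → ℝ,
      ∑ i, ∑ j, W i j * (y j)^2 = ∑ i, ∑ j, W i j * (y i)^2 := by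
    intro y
    rw [Finset.sum_comm]
    exact Finset.sum_congr rfl fun j _ => Finset.sum_congr rfl fun i _ => by rw [hW j i]
  -- B ≤ A
  have hAB : ∀ y : Fin N → ℝ,
      ∑ i, ∑ j, W i j * (y i * y j) ≤ ∑ i, ∑ j, W i j * (y i)^2 := by
    intro y
    have h := Finset.sum_le_sum (s := Finset.univ)
      (fun i (_ : i ∈ Finset.univ) => Finset.sum_le_sum (s := Finset.univ)
        (fun j (_ : j ∈ Finset.univ) => by
          nlinarith [hnonneg i j, sq_nonneg (y i - y j)] :
          ∀ j ∈ Finset.univ, 2 * (W i j * (y i * y j)) ≤ W i j * (y i)^2 + W i j * (y j)^2))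
    simp only [Finset.sum_add_distrib, ← Finset.mul_sum] at h
    have hs := hswap y
    linarith [h]
  -- diagonal bound : 4D ≤ 2A + 2B
  have hDbd : ∀ y : Fin N → ℝ,
      4 * (∑ i, W i i * (y i)^2)
        ≤ 2 * (∑ i, ∑ j, W i j * (y i)^2) + 2 * (∑ i, ∑ j, W i j * (y i * y j)) := by
    intro y
    have h1 : ∀ i, W i i * (y i + y i)^2 ≤ ∑ j, W i j * (y i + y j)^2 := fun i =>
      Finset.single_le_sum (f := fun j => W i j * (y i + y j)^2)
        (fun j _ => mul_nonneg (hnonneg i j) (sq_nonneg _)) (Finset.mem_univ i)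
    have h2 : ∑ i, W i i * (y i + y i)^2 ≤ ∑ i, ∑ j, W i j * (y i + y j)^2 :=
      Finset.sum_le_sum fun i _ => h1 i
    have e3 : ∑ i, W i i * (y i + y i)^2 = 4 * ∑ i, W i i * (y i)^2 := by
      rw [Finset.mul_sum]
      exact Finset.sum_congr rfl fun i _ => by ring
    have e4 : ∑ i, ∑ j, W i j * (y i + y j)^2
        = (∑ i, ∑ j, W i j * (y i)^2) + (∑ i, ∑ j, W i j * (y j)^2)
          + 2 * (∑ i, ∑ j, W i j * (y i * y j)) := by
      rw [show (∑ i, ∑ j, W i j * (y i + y j)^2)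
        = ∑ i, ∑ j, (W i j * (y i)^2 + W i j * (y j)^2 + 2*(W i j * (y i * y j))) from
        Finset.sum_congr rfl fun i _ => Finset.sum_congr rfl fun j _ => by ring]
      simp only [Finset.sum_add_distrib, ← Finset.mul_sum]
    rw [e3, e4] at h2
    have hs := hswap y
    linarith [h2]
  have hDpos : ∀ y : Fin N → ℝ, 0 ≤ ∑ i, W i i * (y i)^2 :=
    fun y => Finset.sum_nonneg fun i _ => mul_nonneg (hnonneg i i) (sq_nonneg _)
  have hdotxx : ∀ x : Fin N → ℝ,
      ∑ i, ∑ j, W i j * (x i / Real.sqrt (d i))^2 = dotProduct x x := by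
    intro x
    rw [show dotProduct x x = ∑ i, x i ^2 from
      Finset.sum_congr rfl fun i _ => (sq (x i)).symm]
    exact (Finset.sum_congr rfl fun i _ => (hx2 x i).symm)
  -- PSD and upper bound
  have hpsd : ∀ x : Fin N → ℝ, 0 ≤ dotProduct x (S.mulVec x) := by
    intro x
    rw [hquad x]
    have := hAB (fun i => x i / Real.sqrt (d i))
    have := hDpos (fun i => x i / Real.sqrt (d i))
    linarith
  have hub : ∀ x : Fin N → ℝ, dotProduct x (S.mulVec x) ≤ 2 * dotProduct x x := by
    intro x
    rw [hquad x, ← hdotxx x]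
    have := hAB (fun i => x i / Real.sqrt (d i))
    have := hDbd (fun i => x i / Real.sqrt (d i))
    have := hDpos (fun i => x i / Real.sqrt (d i))
    linarith
  -- spectral decomposition
  set e := hHerm.eigenvectorBasis with he_def
  set lam := hHerm.eigenvalues with hlam_def
  have heig : ∀ k, S.mulVec (e k) = lam k • (e k) := hHerm.mulVec_eigenvectorBasis
  have hbridge : ∀ a b : EuclideanSpace ℝ (Fin N), (inner ℝ a b : ℝ) = dotProduct a b := by
    intro a b
    simp [PiLp.inner_apply, RCLike.inner_apply, dotProduct, mul_comm]
  have hnorm1 : ∀ k : Fin N, dotProduct (e k) (e k) = 1 := by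
    intro k
    rw [← hbridge]
    simpa using orthonormal_iff_ite.mp e.orthonormal k k
  have hexpand : ∀ (x : EuclideanSpace ℝ (Fin N)) (i : Fin N),
      x i = ∑ k, (dotProduct (e k) x) * (e k i) := by
    intro x i
    conv_lhs => rw [← e.sum_repr' x, WithLp.ofLp_sum]
    exact (Finset.sum_apply i Finset.univ _).trans
      (Finset.sum_congr rfl fun k _ => by rw [← hbridge]; rfl)
  have hlam_eq : ∀ k, dotProduct (e k) (S.mulVec (e k)) = lam k := by
    intro k
    rw [heig k, dotProduct_smul, smul_eq_mul, hnorm1 k, mul_one]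
  have hlam0 : ∀ k, 0 ≤ lam k := fun k => (hlam_eq k) ▸ hpsd (e k)
  have hlam2 : ∀ k, lam k ≤ 2 := by
    intro k
    have h := hub (e k)
    rw [hlam_eq k, hnorm1 k] at h
    linarith
  have hc2' : c^2 < 2 := by
    have h := Real.sq_sqrt (by norm_num : (0:ℝ) ≤ 2)
    nlinarith [Real.sqrt_nonneg 2]
  -- symmetrized solution
  let v : ℤ → Fin N → ℝ := fun t i => Real.sqrt (d i) * u t i
  have hSv : ∀ (s : ℤ) (i : Fin N), (S.mulVec (v s)) i = Real.sqrt (d i) * (L.mulVec (u s)) i := by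
    intro s i
    show ∑ j, S i j * (Real.sqrt (d j) * u s j) = Real.sqrt (d i) * ∑ j, L i j * u s j
    rw [Finset.mul_sum]
    refine Finset.sum_congr rfl fun j _ => ?_
    by_cases h : i = j
    · subst h
      rw [hSdiag i, hL' i i, if_pos rfl]
      ring
    · rw [hSoff i j h, hL' i j, if_neg h]
      have hdi : d i = Real.sqrt (d i) * Real.sqrt (d i) := (Real.mul_self_sqrt (hd i).le).symm
      rw [hdi]
      field_simp [(hsd i).ne', (hsd j).ne']
      rw [Real.sq_sqrt (sq_nonneg _)]
  have hvrec : ∀ t : ℤ, 1 ≤ t → ∀ i,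
      v t i = 2 * v (t-1) i - v (t-2) i - c^2 * (S.mulVec (v (t-1))) i := by
    intro t ht i
    have h := congrFun (hrec t ht) i
    show Real.sqrt (d i) * u t i = _
    rw [h, hSv (t-1) i]
    show Real.sqrt (d i) * (2 * u (t-1) i - u (t-2) i - c^2 * (L.mulVec (u (t-1))) i)
      = 2 * (Real.sqrt (d i) * u (t-1) i) - Real.sqrt (d i) * u (t-2) i
        - c^2 * (Real.sqrt (d i) * (L.mulVec (u (t-1))) i)
    ring
  -- modes
  let y : Fin N → ℤ → ℝ := fun k t => dotProduct (e k) (v t)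
  have hsym_dot : ∀ (w : Fin N → ℝ) (k : Fin N),
      dotProduct (e k) (S.mulVec w) = lam k * dotProduct (e k) w := by
    intro w k
    rw [Matrix.dotProduct_mulVec]
    have hvm : Matrix.vecMul ((e k)) S = S.mulVec (e k) := by
      funext i
      show ∑ j, e k j * S j i = ∑ j, S i j * e k j
      exact Finset.sum_congr rfl fun j _ => by rw [← hSsym i j]; ring
    rw [hvm, heig k, smul_dotProduct, smul_eq_mul]
  have hyrec : ∀ k, ∀ t : ℤ, 1 ≤ t →
      y k t = (2 - c^2 * lam k) * y k (t-1) - y k (t-2) := by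
    intro k t ht
    calc y k t = ∑ i, e k i * v t i := rfl
    _ = ∑ i, (2*(e k i * v (t-1) i) - e k i * v (t-2) i
          - c^2 * (e k i * (S.mulVec (v (t-1))) i)) :=
        Finset.sum_congr rfl fun i _ => by rw [hvrec t ht i]; ring
    _ = 2*(∑ i, e k i * v (t-1) i) - (∑ i, e k i * v (t-2) i)
          - c^2 * ∑ i, e k i * (S.mulVec (v (t-1))) i := by
        rw [Finset.sum_sub_distrib, Finset.sum_sub_distrib, Finset.mul_sum, Finset.mul_sum]
    _ = 2 * y k (t-1) - y k (t-2) - c^2 * (lam k * y k (t-1)) := by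
        rw [show (∑ i, e k i * (S.mulVec (v (t-1))) i)
          = dotProduct ((e k)) (S.mulVec (v (t-1))) from rfl, hsym_dot]
        rfl
    _ = (2 - c^2 * lam k) * y k (t-1) - y k (t-2) := by ring
  have hy_init : ∀ k, y k (-1) = y k 0 := by
    intro k
    have : v (-1) = v 0 := by
      funext i
      show Real.sqrt (d i) * u (-1) i = Real.sqrt (d i) * u 0 i
      rw [hinit]
    show dotProduct (e k) (v (-1)) = dotProduct (e k) (v 0)
    rw [this]
  -- apply the scalar bound to each mode
  have hybound : ∀ k, ∀ t : ℤ, 0 ≤ t →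
      (y k t)^2 ≤ 4 * (y k 0)^2 / (2 + (2 - c^2 * lam k)) := by
    intro k
    refine scalar_mode_bound (2 - c^2 * lam k) ?_ ?_ (y k) (hy_init k) (hyrec k)
    · nlinarith [hlam2 k, hlam0 k, sq_nonneg c]
    · nlinarith [hlam0 k, sq_nonneg c]
  let b : Fin N → ℝ := fun k => Real.sqrt (4 * (y k 0)^2 / (2 + (2 - c^2 * lam k)))
  have habs_y : ∀ k, ∀ t : ℤ, 0 ≤ t → |y k t| ≤ b k := by
    intro k t ht
    rw [← Real.sqrt_sq_eq_abs]
    exact Real.sqrt_le_sqrt (hybound k t ht)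
  have hb_nonneg : ∀ k, 0 ≤ b k := fun k => Real.sqrt_nonneg _
  have hek : ∀ (k : Fin N) (i : Fin N), |e k i| ≤ 1 := by
    intro k i
    have h1 : e k i * e k i ≤ ∑ j, e k j * e k j :=
      Finset.single_le_sum (fun j (_ : j ∈ Finset.univ) => mul_self_nonneg (e k j))
        (Finset.mem_univ i)
    rw [show (∑ j, e k j * e k j) = 1 from hnorm1 k] at h1
    nlinarith [abs_nonneg (e k i), abs_mul_abs_self (e k i)]
  have hv_bound : ∀ t : ℤ, 0 ≤ t → ∀ i, |v t i| ≤ ∑ k, b k := by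
    intro t ht i
    rw [show v t i = _ from hexpand (WithLp.toLp 2 (v t)) i]
    calc |∑ k, dotProduct (e k) (v t) * e k i|
        ≤ ∑ k, |dotProduct (e k) (v t) * e k i| :=
          Finset.abs_sum_le_sum_abs _ _
    _ ≤ ∑ k, b k := by
        refine Finset.sum_le_sum fun k _ => ?_
        rw [abs_mul]
        calc |dotProduct (e k) (v t)| * |e k i|
            ≤ b k * 1 := mul_le_mul (habs_y k t ht) (hek k i) (abs_nonneg _) (hb_nonneg k)
        _ = b k := mul_one _
  -- conclude
  refine ⟨(∑ k, b k) * (∑ j, (Real.sqrt (d j))⁻¹), ?_⟩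
  intro t ht i
  have hsum_b : 0 ≤ ∑ k, b k := Finset.sum_nonneg fun k _ => hb_nonneg k
  have hui : |u t i| = |v t i| * (Real.sqrt (d i))⁻¹ := by
    have hv : v t i = Real.sqrt (d i) * u t i := rfl
    rw [hv, abs_mul, abs_of_pos (hsd i)]
    field_simp [(hsd i).ne']
  rw [hui]
  have hinv_le : (Real.sqrt (d i))⁻¹ ≤ ∑ j, (Real.sqrt (d j))⁻¹ :=
    Finset.single_le_sum (fun j (_ : j ∈ Finset.univ) => inv_nonneg.mpr (hsd j).le)
      (Finset.mem_univ i)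
  exact mul_le_mul (hv_bound t ht i) hinv_le (inv_nonneg.mpr (hsd i).le) hsum_b
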